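/- For any k, the k-th Location Deterministic Mechanism (place facility at the k-th smallest agent location) has approximation ratio at most 4 for the objective IIF_1: for any profile r with output y = x_(k), IIF_1(y, r) <= 4 * IIF_1(y*, r) for the optimal y*. -/

import Mathlib

open Finset

variable {n m : ℕ}

/-- Members of group `j`. -/
def grp (g : Fin n → Fin m) (j : Fin m) : Finset (Fin n) :=
  Finset.univ.filter (fun i => g i = j)

/-- Maximum total group cost. -/
noncomputable def mtgc (x : Fin n → ℝ) (g : Fin n → Fin m) (y : ℝ) : ℝ :=
  ⨆ j : Fin m, ∑ i ∈ grp g j, |y - x i|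

/-- Maximum average group cost. -/
noncomputable def magc (x : Fin n → ℝ) (g : Fin n → Fin m) (y : ℝ) : ℝ :=
  ⨆ j : Fin m, (∑ i ∈ grp g j, |y - x i|) / (grp g j).card

/-- Left median of a multiset of reals (`⌈k/2⌉`-th smallest). -/
noncomputable def medianOf (s : Multiset ℝ) : ℝ :=
  (s.sort (· ≤ ·)).getD ((Multiset.card s - 1) / 2) 0

/-- Left median of the locations of the members of group `j`. -/
noncomputable def groupMedian (x : Fin n → ℝ) (g : Fin n → Fin m) (j : Fin m) : ℝ :=
  medianOf ((grp g j).val.map x)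

/-- A largest group, ties broken by the smallest index. -/
noncomputable def majGroup (g : Fin n → Fin m) [NeZero m] : Fin m :=
  (Finset.univ.filter
    (fun j => ∀ k : Fin m, (grp g k).card ≤ (grp g j).card)).min' (by
      obtain ⟨b, -, hb⟩ :=
        Finset.exists_max_image Finset.univ (fun j => (grp g j).card) Finset.univ_nonempty
      exact ⟨b, Finset.mem_filter.mpr ⟨Finset.mem_univ _, fun k => hb k (Finset.mem_univ k)⟩⟩)

/-- Majority Group Deterministic Mechanism. -/
noncomputable def MGDM (x : Fin n → ℝ) (g : Fin n → Fin m) [NeZero m] : ℝ :=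
  groupMedian x g (majGroup g)

noncomputable def avgc (x : Fin n → ℝ) (g : Fin n → Fin m) (j : Fin m) (y : ℝ) : ℝ :=
  (∑ i ∈ grp g j, |y - x i|) / (grp g j).card

noncomputable def maxc (x : Fin n → ℝ) (g : Fin n → Fin m) (j : Fin m) (y : ℝ) : ℝ :=
  sSup ((fun i => |y - x i|) '' {i | g i = j})

noncomputable def minc (x : Fin n → ℝ) (g : Fin n → Fin m) (j : Fin m) (y : ℝ) : ℝ :=
  sInf ((fun i => |y - x i|) '' {i | g i = j})

noncomputable def IIF1 (x : Fin n → ℝ) (g : Fin n → Fin m) (y : ℝ) : ℝ :=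
  (⨆ j : Fin m, avgc x g j y) + ⨆ j : Fin m, (maxc x g j y - minc x g j y)
section MyAux

variable (x : Fin n → ℝ) (g : Fin n → Fin m) (j : Fin m) (y : ℝ)

lemma my_set_nonempty (hg : Function.Surjective g) :
    ((fun i => |y - x i|) '' {i | g i = j}).Nonempty := by
  obtain ⟨i, hi⟩ := hg j
  exact ⟨_, ⟨i, hi, rfl⟩⟩

lemma my_le_maxc {i : Fin n} (hi : g i = j) : |y - x i| ≤ maxc x g j y :=
  le_csSup ((Set.toFinite _).bddAbove) ⟨i, hi, rfl⟩

lemma my_minc_le {i : Fin n} (hi : g i = j) : minc x g j y ≤ |y - x i| :=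
  csInf_le ((Set.toFinite _).bddBelow) ⟨i, hi, rfl⟩

lemma my_exists_maxc (hg : Function.Surjective g) :
    ∃ i : Fin n, g i = j ∧ maxc x g j y = |y - x i| := by
  have h := (my_set_nonempty x g j y hg).csSup_mem (Set.toFinite _)
  obtain ⟨i, hi, hval⟩ := h
  exact ⟨i, hi, hval.symm⟩

lemma my_minc_nonneg (hg : Function.Surjective g) : 0 ≤ minc x g j y := by
  apply le_csInf (my_set_nonempty x g j y hg)
  rintro b ⟨i, hi, rfl⟩
  positivity

lemma my_grp_nonempty (hg : Function.Surjective g) : (grp g j).Nonempty := by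
  obtain ⟨i, hi⟩ := hg j
  exact ⟨i, Finset.mem_filter.mpr ⟨Finset.mem_univ i, hi⟩⟩

lemma my_avgc_le_maxc (hg : Function.Surjective g) : avgc x g j y ≤ maxc x g j y := by
  have hcard : (0 : ℝ) < (grp g j).card := by
    exact_mod_cast Finset.card_pos.mpr (my_grp_nonempty g j hg)
  rw [avgc, div_le_iff₀ hcard]
  calc ∑ i ∈ grp g j, |y - x i| ≤ ∑ i ∈ grp g j, maxc x g j y := by
        apply Finset.sum_le_sum
        intro i hi
        exact my_le_maxc x g j y (Finset.mem_filter.mp hi).2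
    _ = maxc x g j y * (grp g j).card := by
        rw [Finset.sum_const, nsmul_eq_mul, mul_comm]

lemma my_minc_le_avgc (hg : Function.Surjective g) : minc x g j y ≤ avgc x g j y := by
  have hcard : (0 : ℝ) < (grp g j).card := by
    exact_mod_cast Finset.card_pos.mpr (my_grp_nonempty g j hg)
  rw [avgc, le_div_iff₀ hcard]
  calc minc x g j y * (grp g j).card = ∑ _i ∈ grp g j, minc x g j y := by
        rw [Finset.sum_const, nsmul_eq_mul, mul_comm]
    _ ≤ ∑ i ∈ grp g j, |y - x i| := by
        apply Finset.sum_le_sum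
        intro i hi
        exact my_minc_le x g j y (Finset.mem_filter.mp hi).2

lemma my_maxc_le_IIF1 [NeZero m] (hg : Function.Surjective g) :
    maxc x g j y ≤ IIF1 x g y := by
  have h1 : avgc x g j y ≤ ⨆ j', avgc x g j' y :=
    le_ciSup (f := fun j' => avgc x g j' y) (Finite.bddAbove_range _) j
  have h2 : maxc x g j y - minc x g j y ≤ ⨆ j', (maxc x g j' y - minc x g j' y) :=
    le_ciSup (f := fun j' => maxc x g j' y - minc x g j' y) (Finite.bddAbove_range _) j
  have h3 := my_minc_le_avgc x g j y hg
  unfold IIF1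
  linarith

end MyAux

/-- The k-th Location Deterministic Mechanism (facility at the k-th smallest
agent location) has approximation ratio at most 4 for the objective `IIF₁`. -/
theorem stmt16 [NeZero m] (x : Fin n → ℝ) (g : Fin n → Fin m)
    (hx : Monotone x) (hg : Function.Surjective g) (k : Fin n) (ystar : ℝ)
    (hopt : ∀ z : ℝ, IIF1 x g ystar ≤ IIF1 x g z) :
    IIF1 x g (x k) ≤ 4 * IIF1 x g ystar := by
  haveI : Nonempty (Fin m) := ⟨⟨0, NeZero.pos m⟩⟩
  have hy : |x k - ystar| ≤ IIF1 x g ystar := by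
    calc |x k - ystar| = |ystar - x k| := abs_sub_comm _ _
      _ ≤ maxc x g (g k) ystar := my_le_maxc x g (g k) ystar rfl
      _ ≤ IIF1 x g ystar := my_maxc_le_IIF1 x g (g k) ystar hg
  have hM : ∀ j : Fin m, maxc x g j (x k) ≤ 2 * IIF1 x g ystar := by
    intro j
    obtain ⟨i, hi, heq⟩ := my_exists_maxc x g j (x k) hg
    have htri : |x k - x i| ≤ |x k - ystar| + |ystar - x i| := abs_sub_le _ _ _
    have h1 : |ystar - x i| ≤ IIF1 x g ystar :=
      (my_le_maxc x g j ystar hi).trans (my_maxc_le_IIF1 x g j ystar hg)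
    rw [heq]
    linarith
  have hA : (⨆ j : Fin m, avgc x g j (x k)) ≤ 2 * IIF1 x g ystar := by
    apply ciSup_le
    intro j
    exact (my_avgc_le_maxc x g j (x k) hg).trans (hM j)
  have hB : (⨆ j : Fin m, (maxc x g j (x k) - minc x g j (x k))) ≤ 2 * IIF1 x g ystar := by
    apply ciSup_le
    intro j
    have := my_minc_nonneg x g j (x k) hg
    linarith [hM j]
  have hrw : IIF1 x g (x k) =
      (⨆ j : Fin m, avgc x g j (x k)) +
        ⨆ j : Fin m, (maxc x g j (x k) - minc x g j (x k)) := rfl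
  rw [hrw]
  linarith
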